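/- arXiv:1403.3999 — 4 statements merged into one kernel-verified Lean document; each statement's English description precedes it below -/
import Mathlib

section
/- Let Q ≥ 0, H ≥ 0, R > 0, and A, B be real constants. Then the scalar Riccati differential equation P'(t) + 2A·P(t) − B²R⁻¹·P(t)² + Q = 0 on [0,T] with terminal condition P(T) = H admits a unique solution P : [0,T] → ℝ, and this solution satisfies P(t) ≥ 0 for all t ∈ [0,T]. -/
open Set Real

private lemma key1 {A c Q H d : ℝ} (hQ : 0 ≤ Q) (hH : 0 ≤ H) (hc : 0 ≤ c)
    (hd : 0 ≤ d) (hd2 : d ^ 2 = A ^ 2 + c * Q) : 0 ≤ c * H - A + d := by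
  rcases le_or_gt A (c * H) with h | h
  · linarith
  · by_contra hcon
    push_neg at hcon
    have h1 : 0 < A - c * H - d := by linarith
    have h2 : 0 < A - c * H + d := by linarith
    nlinarith [mul_pos h1 h2, mul_nonneg hc hQ,
      mul_nonneg (mul_nonneg hc hH) (sub_nonneg.mpr h.le)]

private lemma key2 {A c Q H d : ℝ} (hQ : 0 ≤ Q) (hH : 0 ≤ H) (hc : 0 ≤ c)
    (hd : 0 ≤ d) (hd2 : d ^ 2 = A ^ 2 + c * Q) : 0 ≤ H * d + A * H + Q := by
  rcases le_or_gt 0 (A * H + Q) with h | h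
  · nlinarith [mul_nonneg hH hd]
  · by_contra hcon
    push_neg at hcon
    have h1 : 0 < -(A * H + Q) - H * d := by linarith
    have h2 : 0 < -(A * H + Q) + H * d := by nlinarith [mul_nonneg hH hd]
    nlinarith [mul_pos h1 h2, mul_nonneg (mul_nonneg hc hQ) (mul_nonneg hH hH),
      mul_nonneg hQ hQ, mul_nonneg hQ (neg_nonneg.mpr h.le)]

private lemma riccati_exists (A c Q H : ℝ) (hQ : 0 ≤ Q) (hH : 0 ≤ H) (hc : 0 ≤ c) :
    ∃ w : ℝ → ℝ, w 0 = H ∧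
      (∀ τ, 0 ≤ τ → HasDerivAt w (2 * A * w τ - c * (w τ) ^ 2 + Q) τ) ∧
      (∀ τ, 0 ≤ τ → 0 ≤ w τ) := by
  by_cases hδ : A = 0 ∧ c * Q = 0
  · obtain ⟨hA, hcQ⟩ := hδ
    subst hA
    rcases (mul_eq_zero.mp hcQ) with hc0 | hQ0
    · subst hc0
      refine ⟨fun τ => H + Q * τ, by simp, ?_, ?_⟩
      · intro τ hτ
        have h : HasDerivAt (fun τ : ℝ => H + Q * τ) Q τ := by
          simpa using ((hasDerivAt_id τ).const_mul Q).const_add H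
        convert h using 1; ring
      · intro τ hτ; positivity
    · subst hQ0
      refine ⟨fun τ => H / (1 + c * H * τ), by simp, ?_, ?_⟩
      · intro τ hτ
        have hD : 0 < 1 + c * H * τ := by positivity
        have hden : HasDerivAt (fun τ : ℝ => 1 + c * H * τ) (c * H) τ := by
          simpa using ((hasDerivAt_id τ).const_mul (c * H)).const_add 1
        have h := (hasDerivAt_const τ H).div hden hD.ne'
        refine h.congr_deriv (Eq.symm ?_)
        field_simp
        ring
      · intro τ hτ
        have hD : 0 < 1 + c * H * τ := by positivity
        positivity
  · set d := Real.sqrt (A ^ 2 + c * Q) with hd_def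
    have hsum : 0 ≤ A ^ 2 + c * Q := by positivity
    have hd2 : d ^ 2 = A ^ 2 + c * Q := Real.sq_sqrt hsum
    have hd0 : 0 ≤ d := Real.sqrt_nonneg _
    have hdpos : 0 < d := by
      rcases lt_or_eq_of_le hd0 with h | h
      · exact h
      · exfalso
        have h0 : A ^ 2 + c * Q = 0 := by rw [← hd2, ← h]; ring
        have hA : A = 0 := by nlinarith [sq_nonneg A, mul_nonneg hc hQ]
        exact hδ ⟨hA, by nlinarith [sq_nonneg A]⟩
    have hk1 : 0 ≤ c * H - A + d := key1 hQ hH hc hd0 hd2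
    have hk2 : 0 ≤ H * d + A * H + Q := key2 hQ hH hc hd0 hd2
    refine ⟨fun τ => (H * d * Real.cosh (d * τ) + (A * H + Q) * Real.sinh (d * τ)) /
        (d * Real.cosh (d * τ) + (c * H - A) * Real.sinh (d * τ)), ?_, ?_, ?_⟩
    · simp [hdpos.ne']
    · intro τ hτ
      have hshn : 0 ≤ Real.sinh (d * τ) := Real.sinh_nonneg_iff.mpr (by positivity)
      have hcs : Real.cosh (d * τ) - Real.sinh (d * τ) = Real.exp (-(d * τ)) :=
        Real.cosh_sub_sinh _
      have hexp : 0 < Real.exp (-(d * τ)) := Real.exp_pos _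
      have hDpos : 0 < d * Real.cosh (d * τ) + (c * H - A) * Real.sinh (d * τ) := by
        nlinarith [mul_nonneg hk1 hshn]
      have hlin : HasDerivAt (fun τ : ℝ => d * τ) d τ := by
        simpa using (hasDerivAt_id τ).const_mul d
      have hch : HasDerivAt (fun τ => Real.cosh (d * τ)) (Real.sinh (d * τ) * d) τ :=
        (Real.hasDerivAt_cosh (d * τ)).comp τ hlin
      have hsh : HasDerivAt (fun τ => Real.sinh (d * τ)) (Real.cosh (d * τ) * d) τ :=
        (Real.hasDerivAt_sinh (d * τ)).comp τ hlin
      have hN' : HasDerivAt (fun τ => H * d * Real.cosh (d * τ) + (A * H + Q) * Real.sinh (d * τ))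
          (H * d * (Real.sinh (d * τ) * d) + (A * H + Q) * (Real.cosh (d * τ) * d)) τ :=
        (hch.const_mul (H * d)).add (hsh.const_mul (A * H + Q))
      have hD' : HasDerivAt (fun τ => d * Real.cosh (d * τ) + (c * H - A) * Real.sinh (d * τ))
          (d * (Real.sinh (d * τ) * d) + (c * H - A) * (Real.cosh (d * τ) * d)) τ :=
        (hch.const_mul d).add (hsh.const_mul (c * H - A))
      have hdiv := hN'.div hD' hDpos.ne'
      refine hdiv.congr_deriv (Eq.symm ?_)
      beta_reduce
      set sh := Real.sinh (d * τ) with hsh_def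
      set ch := Real.cosh (d * τ) with hch_def
      have hident : (H * d * (sh * d) + (A * H + Q) * (ch * d)) * (d * ch + (c * H - A) * sh) -
          (H * d * ch + (A * H + Q) * sh) * (d * (sh * d) + (c * H - A) * (ch * d)) =
          2 * A * ((H * d * ch + (A * H + Q) * sh) * (d * ch + (c * H - A) * sh)) -
          c * (H * d * ch + (A * H + Q) * sh) ^ 2 + Q * (d * ch + (c * H - A) * sh) ^ 2 := by
        linear_combination (-(sh ^ 2 * (2 * A * H + Q - c * H ^ 2))) * hd2
      rw [hident]
      rw [eq_div_iff (by positivity : ((d * ch + (c * H - A) * sh) ^ 2 : ℝ) ≠ 0)]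
      generalize H * d * ch + (A * H + Q) * sh = N at *
      generalize d * ch + (c * H - A) * sh = D at *
      field_simp
    · intro τ hτ
      have hshn : 0 ≤ Real.sinh (d * τ) := Real.sinh_nonneg_iff.mpr (by positivity)
      have hcs : Real.cosh (d * τ) - Real.sinh (d * τ) = Real.exp (-(d * τ)) :=
        Real.cosh_sub_sinh _
      have hexp : 0 < Real.exp (-(d * τ)) := Real.exp_pos _
      have hDpos : 0 < d * Real.cosh (d * τ) + (c * H - A) * Real.sinh (d * τ) := by
        nlinarith [mul_nonneg hk1 hshn]
      have hNnn : 0 ≤ H * d * Real.cosh (d * τ) + (A * H + Q) * Real.sinh (d * τ) := by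
        nlinarith [mul_nonneg hk2 hshn, mul_nonneg (mul_nonneg hH hd0) hexp.le]
      exact div_nonneg hNnn hDpos.le

private lemma riccati_unique {T A c Q : ℝ} (hT : 0 < T) {f g : ℝ → ℝ}
    (hf : ContinuousOn f (Icc 0 T))
    (hf' : ∀ t ∈ Icc 0 T, HasDerivWithinAt f (-(2 * A * f t) + c * (f t) ^ 2 - Q) (Icc 0 T) t)
    (hg : ContinuousOn g (Icc 0 T))
    (hg' : ∀ t ∈ Icc 0 T, HasDerivWithinAt g (-(2 * A * g t) + c * (g t) ^ 2 - Q) (Icc 0 T) t)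
    (hend : f T = g T) : EqOn f g (Icc 0 T) := by
  obtain ⟨Mf, hMf⟩ := (isCompact_Icc : IsCompact (Icc (0:ℝ) T)).exists_bound_of_continuousOn hf
  obtain ⟨Mg, hMg⟩ := (isCompact_Icc : IsCompact (Icc (0:ℝ) T)).exists_bound_of_continuousOn hg
  set M : ℝ := max (max Mf Mg) 0 with hM_def
  have hM0 : 0 ≤ M := le_max_right _ _
  have hfM : ∀ t ∈ Icc 0 T, f t ∈ Icc (-M) M := by
    intro t ht
    have := hMf t ht
    rw [Real.norm_eq_abs, abs_le] at this
    constructor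
    · linarith [this.1, neg_le_neg ((le_max_left Mf Mg).trans (le_max_left _ (0:ℝ)))]
    · exact this.2.trans ((le_max_left Mf Mg).trans (le_max_left _ 0))
  have hgM : ∀ t ∈ Icc 0 T, g t ∈ Icc (-M) M := by
    intro t ht
    have := hMg t ht
    rw [Real.norm_eq_abs, abs_le] at this
    constructor
    · linarith [this.1, neg_le_neg ((le_max_right Mf Mg).trans (le_max_left _ (0:ℝ)))]
    · exact this.2.trans ((le_max_right Mf Mg).trans (le_max_left _ 0))
  set K : NNReal := Real.toNNReal (2 * |A| + |c| * (2 * M)) with hK_def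
  have hlip : ∀ t : ℝ, LipschitzOnWith K
      (fun x : ℝ => -(2 * A * x) + c * x ^ 2 - Q) (Icc (-M) M) := by
    intro t
    rw [lipschitzOnWith_iff_dist_le_mul]
    intro x hx y hy
    rw [Real.dist_eq, Real.dist_eq]
    have hxy : (-(2 * A * x) + c * x ^ 2 - Q) - (-(2 * A * y) + c * y ^ 2 - Q) =
        (x - y) * (c * (x + y) - 2 * A) := by ring
    rw [hxy, abs_mul, mul_comm]
    apply mul_le_mul_of_nonneg_right _ (abs_nonneg _)
    have h1 : |c * (x + y) - 2 * A| ≤ |c| * |x + y| + 2 * |A| := by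
      calc |c * (x + y) - 2 * A| ≤ |c * (x + y)| + |2 * A| := abs_sub _ _
        _ = |c| * |x + y| + 2 * |A| := by rw [abs_mul, abs_mul]; simp [abs_of_nonneg]
    have h2 : |x + y| ≤ 2 * M := by
      rw [abs_le]
      constructor <;> [linarith [hx.1, hy.1]; linarith [hx.2, hy.2]]
    have h3 : |c| * |x + y| ≤ |c| * (2 * M) := by
      apply mul_le_mul_of_nonneg_left h2 (abs_nonneg _)
    have hKval : (K : ℝ) = 2 * |A| + |c| * (2 * M) := by
      rw [hK_def, Real.coe_toNNReal]
      positivity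
    rw [hKval]
    linarith
  have hmem : ∀ t ∈ Ioc (0:ℝ) T, Icc (0:ℝ) T ∈ nhdsWithin t (Iic t) := by
    intro t ht
    apply mem_nhdsWithin.mpr
    refine ⟨Ioi 0, isOpen_Ioi, ht.1, ?_⟩
    rintro x ⟨hx1, hx2⟩
    exact ⟨le_of_lt hx1, le_trans hx2 ht.2⟩
  exact ODE_solution_unique_of_mem_Icc_left (v := fun _ x => -(2 * A * x) + c * x ^ 2 - Q)
    (s := fun _ => Icc (-M) M) (fun t _ => hlip t)
    hf (fun t ht => (hf' t ⟨ht.1.le, ht.2⟩).mono_of_mem_nhdsWithin (hmem t ht))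
    (fun t ht => hfM t ⟨ht.1.le, ht.2⟩)
    hg (fun t ht => (hg' t ⟨ht.1.le, ht.2⟩).mono_of_mem_nhdsWithin (hmem t ht))
    (fun t ht => hgM t ⟨ht.1.le, ht.2⟩)
    hend

/-- Riccati equation: existence, uniqueness (among continuous solutions on [0,T]),
and nonnegativity of the solution. -/
theorem stmt_0 (T A B R Q H : ℝ) (hT : 0 < T) (hQ : 0 ≤ Q) (hH : 0 ≤ H) (hR : 0 < R) :
    ∃ P : ℝ → ℝ,
      (ContinuousOn P (Icc 0 T) ∧
        (∀ t ∈ Icc 0 T,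
          HasDerivWithinAt P (-(2 * A * P t) + B ^ 2 * R⁻¹ * (P t) ^ 2 - Q) (Icc 0 T) t) ∧
        P T = H) ∧
      (∀ t ∈ Icc 0 T, 0 ≤ P t) ∧
      (∀ P' : ℝ → ℝ,
        (ContinuousOn P' (Icc 0 T) ∧
          (∀ t ∈ Icc 0 T,
            HasDerivWithinAt P' (-(2 * A * P' t) + B ^ 2 * R⁻¹ * (P' t) ^ 2 - Q) (Icc 0 T) t) ∧
          P' T = H) → EqOn P' P (Icc 0 T)) := by
  set c : ℝ := B ^ 2 * R⁻¹ with hc_def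
  have hc : 0 ≤ c := by positivity
  obtain ⟨w, hw0, hw', hwnn⟩ := riccati_exists A c Q H hQ hH hc
  set P : ℝ → ℝ := fun t => w (T - t) with hP_def
  have hPd : ∀ t ∈ Icc 0 T, HasDerivAt P (-(2 * A * P t) + c * (P t) ^ 2 - Q) t := by
    intro t ht
    have hτ : 0 ≤ T - t := by linarith [ht.2]
    have h1 := hw' (T - t) hτ
    have h2 : HasDerivAt (fun s : ℝ => T - s) (-1) t := by
      simpa using (hasDerivAt_id t).const_sub T
    have h3 := h1.comp t h2
    refine h3.congr_deriv (Eq.symm ?_)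
    simp only [hP_def]
    ring
  have hPc : ContinuousOn P (Icc 0 T) :=
    fun t ht => ((hPd t ht).continuousAt).continuousWithinAt
  refine ⟨P, ⟨hPc, fun t ht => ((hPd t ht).hasDerivWithinAt), by simp [hP_def, hw0]⟩,
    fun t ht => hwnn (T - t) (by linarith [ht.2]), ?_⟩
  rintro P' ⟨hP'c, hP'd, hP'T⟩
  have hPT : P T = H := by simp [hP_def, hw0]
  exact riccati_unique hT hP'c hP'd hPc (fun t ht => ((hPd t ht).hasDerivWithinAt))
    (by rw [hP'T, hPT])
end

section
/- Let A, B, R, Q, H, T be real constants with R > 0, and let P be the nonnegative solution of the Riccati equation P' + 2AP − B²R⁻¹P² + Q = 0, P(T) = H. For given continuous functions x̄, x̂₀ : [0,T] → ℝ, suppose (p, f) solves the affine terminal-value ODE f'(t) = (−A + B²R⁻¹P(t))·f(t) + (Q − D·P(t))·x̄(t) − α·P(t)·x̂₀(t), f(T) = 0, and x̂ solves x̂'(t) = A·x̂(t) − B²R⁻¹·(P(t)·x̂(t) + f(t)) + D·x̄(t) + α·x̂₀(t) with x̂(0) = x₀. Then p(t) := P(t)·x̂(t) + f(t) solves the adjoint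 terminal-value problem p'(t) = −A·p(t) − Q·(x̂(t) − x̄(t)), p(T) = H·x̂(T). -/
open Set

/-- Decoupling ansatz `p = P·x̂ + f` for the minor player's Hamiltonian system
(deterministic version of Lemma 3.3): it solves the adjoint terminal-value problem. -/
theorem stmt_5 (T A B R Q H D α x₀ : ℝ) (hT : 0 < T) (hR : 0 < R)
    (P f xhat xbar xhat0 : ℝ → ℝ)
    (hxbar : Continuous xbar) (hxhat0 : Continuous xhat0)
    (hP : ∀ t ∈ Icc 0 T,
      HasDerivAt P (-(2 * A * P t) + B ^ 2 * R⁻¹ * (P t) ^ 2 - Q) t)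
    (hPT : P T = H) (hPnn : ∀ t ∈ Icc 0 T, 0 ≤ P t)
    (hf : ∀ t ∈ Icc 0 T,
      HasDerivAt f ((-A + B ^ 2 * R⁻¹ * P t) * f t + (Q - D * P t) * xbar t
        - α * P t * xhat0 t) t)
    (hfT : f T = 0)
    (hxhat : ∀ t ∈ Icc 0 T,
      HasDerivAt xhat (A * xhat t - B ^ 2 * R⁻¹ * (P t * xhat t + f t)
        + D * xbar t + α * xhat0 t) t)
    (hx0 : xhat 0 = x₀) :
    (∀ t ∈ Icc 0 T,
      HasDerivAt (fun s => P s * xhat s + f s)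
        (-(A * (P t * xhat t + f t)) - Q * (xhat t - xbar t)) t) ∧
      P T * xhat T + f T = H * xhat T := by
  constructor
  · intro t ht
    have h := ((hP t ht).mul (hxhat t ht)).add (hf t ht)
    convert h using 1
    · rfl
    · rfl
    · rfl
    ring
  · rw [hPT, hfT]; ring
end

section
/- Let P : [0,T] → ℝ be the solution of P' + 2AP − B²R⁻¹P² + Q = 0, P(T) = H with Q ≥ 0, H ≥ 0, R > 0. Then P is bounded on [0,T]: there exists M ≥ 0 (depending only on A, B, R, Q, H, T) with 0 ≤ P(t) ≤ M for all t ∈ [0,T]. -/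
open Set

/-- The solution of the scalar Riccati equation with `Q ≥ 0`, `H ≥ 0`, `R > 0`
is nonnegative and bounded on `[0,T]`. -/
theorem stmt_6 (T A B R Q H : ℝ) (hT : 0 < T) (hQ : 0 ≤ Q) (hH : 0 ≤ H) (hR : 0 < R)
    (P : ℝ → ℝ) (hPcont : ContinuousOn P (Icc 0 T))
    (hP : ∀ t ∈ Icc 0 T,
      HasDerivWithinAt P (-(2 * A * P t) + B ^ 2 * R⁻¹ * (P t) ^ 2 - Q) (Icc 0 T) t)
    (hPT : P T = H) :
    ∃ M : ℝ, 0 ≤ M ∧ ∀ t ∈ Icc 0 T, 0 ≤ P t ∧ P t ≤ M := by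
  obtain ⟨K, hK⟩ := isCompact_Icc.exists_bound_of_continuousOn hPcont
  have hK0 : 0 ≤ K := le_trans (norm_nonneg _) (hK T ⟨hT.le, le_rfl⟩)
  have habs : ∀ t ∈ Icc 0 T, |P t| ≤ K := by
    intro t ht; simpa [Real.norm_eq_abs] using hK t ht
  set c : ℝ := B ^ 2 * R⁻¹ with hc
  have hc0 : 0 ≤ c := by positivity
  set L : ℝ := 2 * |A| + c * K with hLdef
  -- nonnegativity of P on [0,T]
  have key : ∀ t ∈ Icc 0 T, 0 ≤ P t := by
    intro t₀ ht₀
    by_contra hneg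
    push_neg at hneg
    have h0t : (0:ℝ) ≤ t₀ := ht₀.1
    have htT : t₀ ≤ T := ht₀.2
    have hcont' : ContinuousOn P (Icc t₀ T) := hPcont.mono (Icc_subset_Icc h0t le_rfl)
    have hmem : (0:ℝ) ∈ Icc (P t₀) (P T) := ⟨hneg.le, by rw [hPT]; exact hH⟩
    obtain ⟨u, hu, hPu⟩ := intermediate_value_Icc htT hcont' hmem
    set S : Set ℝ := Icc t₀ T ∩ P ⁻¹' {0} with hSdef
    have hScl : IsClosed S :=
      hcont'.preimage_isClosed_of_isClosed isClosed_Icc isClosed_singleton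
    have hSne : S.Nonempty := ⟨u, hu, hPu⟩
    have hSbdd : BddBelow S := ⟨t₀, fun x hx => hx.1.1⟩
    set s : ℝ := sInf S with hsdef
    have hsS : s ∈ S := hScl.csInf_mem hSne hSbdd
    have hPs : P s = 0 := hsS.2
    have hst : t₀ ≤ s := hsS.1.1
    have hsT : s ≤ T := hsS.1.2
    have hlt : t₀ < s := by
      rcases lt_or_eq_of_le hst with h | h
      · exact h
      · exfalso; rw [← h] at hPs; linarith
    -- P is negative on [t₀, s)
    have hIco : ∀ x ∈ Ico t₀ s, P x < 0 := by
      intro x hx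
      by_contra hge
      push_neg at hge
      have hxT : x ≤ T := le_trans hx.2.le hsT
      have hcont'' : ContinuousOn P (Icc t₀ x) :=
        hPcont.mono (Icc_subset_Icc h0t hxT)
      have hmem' : (0:ℝ) ∈ Icc (P t₀) (P x) := ⟨hneg.le, hge⟩
      obtain ⟨v, hv, hPv⟩ := intermediate_value_Icc hx.1 hcont'' hmem'
      have hvS : v ∈ S := ⟨⟨hv.1, le_trans hv.2 hxT⟩, hPv⟩
      have : s ≤ v := csInf_le hSbdd hvS
      linarith [hv.2, hx.2]
    -- the function g x = exp (L x) * P x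
    set g : ℝ → ℝ := fun x => Real.exp (L * x) * P x with hgdef
    have hgderiv : ∀ x ∈ Ioo t₀ s,
        HasDerivAt g
          (Real.exp (L * x) * L * P x +
            Real.exp (L * x) * (-(2 * A * P x) + c * (P x) ^ 2 - Q)) x := by
      intro x hx
      have hx0T : x ∈ Icc 0 T := ⟨le_trans h0t hx.1.le, le_trans hx.2.le hsT⟩
      have hnhds : Icc (0:ℝ) T ∈ nhds x :=
        Icc_mem_nhds (lt_of_le_of_lt h0t hx.1) (lt_of_lt_of_le hx.2 hsT)
      have hPx : HasDerivAt P (-(2 * A * P x) + c * (P x) ^ 2 - Q) x :=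
        (hP x hx0T).hasDerivAt hnhds
      have hexp : HasDerivAt (fun y => Real.exp (L * y)) (Real.exp (L * x) * L) x := by
        have h1 : HasDerivAt (fun y : ℝ => L * y) L x := by
          simpa using (hasDerivAt_id x).const_mul L
        simpa using h1.exp
      exact hexp.mul hPx
    have hgd_nonpos : ∀ x ∈ Ioo t₀ s,
        Real.exp (L * x) * L * P x +
          Real.exp (L * x) * (-(2 * A * P x) + c * (P x) ^ 2 - Q) ≤ 0 := by
      intro x hx
      have hPxneg : P x < 0 := hIco x ⟨hx.1.le, hx.2⟩
      have hx0T : x ∈ Icc 0 T := ⟨le_trans h0t hx.1.le, le_trans hx.2.le hsT⟩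
      have hKx : -K ≤ P x := (abs_le.mp (habs x hx0T)).1
      have hEpos : 0 < Real.exp (L * x) := Real.exp_pos _
      have hsum : L * P x + (-(2 * A * P x) + c * (P x) ^ 2 - Q) ≤ 0 := by
        have h1 : 0 ≤ (|A| - A) * (-(P x)) :=
          mul_nonneg (sub_nonneg.2 (le_abs_self A)) (by linarith)
        have h2 : 0 ≤ c * ((-(P x)) * (K + P x)) :=
          mul_nonneg hc0 (mul_nonneg (by linarith) (by linarith))
        nlinarith [h1, h2]
      calc Real.exp (L * x) * L * P x +
            Real.exp (L * x) * (-(2 * A * P x) + c * (P x) ^ 2 - Q)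
          = Real.exp (L * x) * (L * P x + (-(2 * A * P x) + c * (P x) ^ 2 - Q)) := by ring
        _ ≤ Real.exp (L * x) * 0 := by
            exact mul_le_mul_of_nonneg_left hsum hEpos.le
        _ = 0 := by ring
    have hgcont : ContinuousOn g (Icc t₀ s) := by
      apply ContinuousOn.mul
      · exact (Real.continuous_exp.comp (continuous_const.mul continuous_id)).continuousOn
      · exact hPcont.mono (Icc_subset_Icc h0t hsT)
    have hanti : AntitoneOn g (Icc t₀ s) := by
      apply antitoneOn_of_deriv_nonpos (convex_Icc t₀ s) hgcont
      · intro x hx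
        rw [interior_Icc] at hx
        exact (hgderiv x hx).differentiableAt.differentiableWithinAt
      · intro x hx
        rw [interior_Icc] at hx
        rw [(hgderiv x hx).deriv]
        exact hgd_nonpos x hx
    have h1 : g s ≤ g t₀ := hanti (left_mem_Icc.2 hst) (right_mem_Icc.2 hst) hst
    have hgs : g s = 0 := by simp [hgdef, hPs]
    have hgt : g t₀ < 0 :=
      mul_neg_of_pos_of_neg (Real.exp_pos _) hneg
    linarith
  refine ⟨K, hK0, fun t ht => ⟨key t ht, ?_⟩⟩
  exact le_trans (le_abs_self _) (habs t ht)
end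

section
/- Consider the forward linear system on [0,T]: for i = 1, …, N, x_i'(t) = (A − B²R⁻¹P(t))·x_i(t) − B²R⁻¹f(t) + D·x^{(N)}(t) + α·x₀(t), and the limit equation x̄'(t) = (A + D − B²R⁻¹P(t))·x̄(t) − B²R⁻¹f(t) + α·x₀(t), with x̄(0) = lim_{N→∞} (1/N)∑ x_i(0) (assumed to exist). If the initial averages converge, (1/N)∑_{i=1}^N x_i(0) → x̄(0), then for every t ∈ [0,T] the state averages converge: x^{(N)}(t) → x̄(t) as N → ∞, uniformly on [0,T]. -/
open Set Filter

/-- Consistency step identifying the mean-field limit equation: if the initial averages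
converge, the state averages of the closed-loop system converge to the limit trajectory,
uniformly on [0,T]. -/
theorem stmt_17 (T A B D R α : ℝ) (hT : 0 < T) (hR : 0 < R)
    (P f x₀ : ℝ → ℝ) (hP : Continuous P) (hf : Continuous f) (hx₀ : Continuous x₀)
    (x : (N : ℕ) → Fin N → ℝ → ℝ) (xbar : ℝ → ℝ)
    (hx : ∀ N : ℕ, 1 ≤ N → ∀ i : Fin N, ∀ t ∈ Icc 0 T,
      HasDerivAt (x N i)
        ((A - B ^ 2 * R⁻¹ * P t) * x N i t - B ^ 2 * R⁻¹ * f t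
          + D * ((1 / (N : ℝ)) * ∑ j, x N j t) + α * x₀ t) t)
    (hxbar : ∀ t ∈ Icc 0 T,
      HasDerivAt xbar
        ((A + D - B ^ 2 * R⁻¹ * P t) * xbar t - B ^ 2 * R⁻¹ * f t + α * x₀ t) t)
    (hinit : Tendsto (fun N : ℕ => (1 / (N : ℝ)) * ∑ j, x N j 0) atTop (nhds (xbar 0))) :
    TendstoUniformlyOn (fun (N : ℕ) (t : ℝ) => (1 / (N : ℝ)) * ∑ j, x N j t)
      xbar atTop (Icc 0 T) := by
  set c : ℝ := B ^ 2 * R⁻¹ with hc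
  obtain ⟨M, hM⟩ := isCompact_Icc.exists_bound_of_continuousOn
    (f := fun t : ℝ => A + D - c * P t)
    (continuousOn_const.sub (continuousOn_const.mul hP.continuousOn))
  set K := max M 0 with hKdef
  have hK0 : 0 ≤ K := le_max_right _ _
  have hMK : ∀ t ∈ Icc (0:ℝ) T, |A + D - c * P t| ≤ K := fun t ht =>
    (hM t ht).trans (le_max_left _ _)
  rw [Metric.tendstoUniformlyOn_iff]
  intro ε hε
  have hexp : 0 < Real.exp (K * T) := Real.exp_pos _
  have h0 : Tendsto (fun N : ℕ => ‖(1 / (N:ℝ)) * ∑ j, x N j 0 - xbar 0‖) atTop (nhds 0) := by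
    have := (hinit.sub (tendsto_const_nhds (x := xbar 0))).norm
    simpa using this
  have hev : ∀ᶠ N : ℕ in atTop, ‖(1 / (N:ℝ)) * ∑ j, x N j 0 - xbar 0‖ < ε / Real.exp (K*T) :=
    h0.eventually (gt_mem_nhds (by positivity))
  filter_upwards [hev, eventually_ge_atTop 1] with N hN hN1
  intro t ht
  set d : ℝ → ℝ := fun s => (1 / (N:ℝ)) * ∑ j, x N j s - xbar s with hd
  have hderiv : ∀ s ∈ Icc (0:ℝ) T, HasDerivAt d ((A + D - c * P s) * d s) s := by
    intro s hs
    have hsum : HasDerivAt (fun u => ∑ j, x N j u)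
        (∑ j, ((A - c * P s) * x N j s - c * f s
          + D * ((1 / (N : ℝ)) * ∑ j, x N j s) + α * x₀ s)) s :=
      HasDerivAt.fun_sum (fun j _ => hx N hN1 j s hs)
    have hNpos : (0:ℝ) < N := by exact_mod_cast hN1
    have hg : HasDerivAt (fun u => (1 / (N:ℝ)) * ∑ j, x N j u)
        ((A + D - c * P s) * ((1 / (N:ℝ)) * ∑ j, x N j s) - c * f s + α * x₀ s) s := by
      have h := hsum.const_mul (1 / (N:ℝ))
      refine h.congr_deriv ?_
      rw [Finset.sum_add_distrib, Finset.sum_add_distrib, Finset.sum_sub_distrib,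
        Finset.sum_const, Finset.sum_const, Finset.sum_const, Finset.card_univ,
        Fintype.card_fin, ← Finset.mul_sum]
      field_simp
      linear_combination (∑ i, x N i s) * D * (mul_inv_cancel₀ hNpos.ne')
    have := hg.sub (hxbar s hs)
    refine this.congr_deriv ?_
    simp only [hd]
    ring
  have hcont : ContinuousOn d (Icc 0 T) := fun s hs =>
    ((hderiv s hs).continuousAt).continuousWithinAt
  have hgb := norm_le_gronwallBound_of_norm_deriv_right_le (f := d)
    (f' := fun s => (A + D - c * P s) * d s) (δ := ‖d 0‖) (K := K) (ε := 0)
    hcont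
    (fun s hs => ((hderiv s (Ico_subset_Icc_self hs)).hasDerivWithinAt))
    le_rfl
    (fun s hs => by
      rw [norm_mul]
      have h1 := hMK s (Ico_subset_Icc_self hs)
      have : ‖A + D - c * P s‖ * ‖d s‖ ≤ K * ‖d s‖ :=
        mul_le_mul_of_nonneg_right (by simpa [Real.norm_eq_abs] using h1) (norm_nonneg _)
      linarith)
  have hb := hgb t ht
  rw [gronwallBound_ε0] at hb
  have hx1 : Real.exp (K * (t - 0)) ≤ Real.exp (K * T) := by
    apply Real.exp_le_exp.2
    have := ht.2
    nlinarith [ht.1]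
  have hchain : ‖d t‖ ≤ ‖d 0‖ * Real.exp (K * T) :=
    hb.trans (mul_le_mul_of_nonneg_left hx1 (norm_nonneg _))
  have hlt : ‖d 0‖ * Real.exp (K * T) < ε := by
    have hd0 : ‖d 0‖ < ε / Real.exp (K * T) := by simpa [hd] using hN
    have := mul_lt_mul_of_pos_right hd0 hexp
    rwa [div_mul_cancel₀ _ (ne_of_gt hexp)] at this
  calc dist (xbar t) ((1 / (N:ℝ)) * ∑ j, x N j t) = ‖d t‖ := by
        rw [Real.dist_eq]; simp [hd, abs_sub_comm]
    _ ≤ ‖d 0‖ * Real.exp (K * T) := hchain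
    _ < ε := hlt
end
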